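/- For any irrational θ, there exist arbitrarily large values of t such that the system 0 < q < t, |θq - p| < 1/(2t) has no solution in integers p, q. -/

import Mathlib

lemma round_nearest (x : ℝ) (m : ℤ) : |x - round x| ≤ |x - m| := by
  rcases eq_or_ne m (round x) with rfl | h
  · rfl
  · have h1 : (1 : ℝ) ≤ |(m : ℝ) - round x| := by
      rw [← Int.cast_sub, ← Int.cast_abs]
      exact_mod_cast Int.one_le_abs (sub_ne_zero.mpr h)
    have h2 : |x - round x| ≤ 1 / 2 := abs_sub_round x
    have h3 : |(m : ℝ) - round x| ≤ |x - m| + |x - round x| := by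
      calc |(m : ℝ) - round x| = |(x - round x) - (x - m)| := by ring_nf
        _ ≤ |x - round x| + |x - m| := abs_sub _ _
        _ = |x - m| + |x - round x| := by ring
    linarith

/-- For irrational θ there exist arbitrarily large t such that the system
0 < q < t, |θq - p| < 1/(2t) has no integer solutions. -/
theorem uniform_exponent_trivial (θ : ℝ) (hθ : Irrational θ) (T : ℝ) :
    ∃ t : ℝ, T < t ∧
      ¬ ∃ p q : ℤ, 0 < q ∧ (q : ℝ) < t ∧ |θ * (q : ℝ) - (p : ℝ)| < 1 / (2 * t) := by
  classical
  set N : ℕ := max ⌈T⌉.toNat 1 with hN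
  have hNpos : 0 < N := by rw [hN]; exact lt_of_lt_of_le Nat.one_pos (le_max_right _ _)
  have hNT : T ≤ N := by
    have : T ≤ (⌈T⌉.toNat : ℝ) := by
      rcases le_or_gt T 0 with h | h
      · exact h.trans (by positivity)
      · have : (⌈T⌉ : ℝ) ≤ (⌈T⌉.toNat : ℝ) := by
          exact_mod_cast Int.self_le_toNat _
        linarith [Int.le_ceil T]
    exact this.trans (by exact_mod_cast Nat.le_max_left _ _)
  -- distance of q*θ to nearest integer, q = 1..N, minimum δ > 0
  have hne : (Finset.Icc 1 N).Nonempty := ⟨1, Finset.mem_Icc.mpr ⟨le_refl 1, hNpos⟩⟩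
  set f : ℕ → ℝ := fun q => |(q : ℝ) * θ - round ((q : ℝ) * θ)| with hf
  set δ : ℝ := (Finset.Icc 1 N).inf' hne f with hδ
  have hfpos : ∀ q : ℕ, 0 < q → 0 < f q := by
    intro q hq
    have hirr : Irrational ((q : ℝ) * θ) := hθ.natCast_mul hq.ne'
    exact abs_pos.mpr (sub_ne_zero.mpr (hirr.ne_int _))
  have hδpos : 0 < δ := by
    rw [hδ, Finset.lt_inf'_iff]
    intro q hq
    exact hfpos q (Finset.mem_Icc.mp hq).1
  -- Dirichlet: there exists a positive q with f q < δ
  have hS : ∃ q : ℕ, 0 < q ∧ f q < δ := by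
    obtain ⟨n, hn⟩ := exists_nat_gt (1 / δ)
    have hnpos : 0 < n := by
      by_contra h
      push_neg at h
      interval_cases n
      · simp at hn; linarith [one_div_pos.mpr hδpos]
    obtain ⟨j, k, hk0, hkn, hjk⟩ := Real.exists_int_int_abs_mul_sub_le θ hnpos
    refine ⟨k.toNat, by omega, ?_⟩
    have hkk : ((k.toNat : ℕ) : ℝ) = (k : ℝ) := by exact_mod_cast Int.toNat_of_nonneg hk0.le
    have h1 : f k.toNat ≤ |(k : ℝ) * θ - j| := by
      rw [hf]; dsimp only; rw [hkk]; exact round_nearest _ j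
    have h2 : 1 / ((n : ℝ) + 1) < δ := by
      rw [div_lt_iff₀ (by positivity)]
      have : 1 / δ < n := hn
      rw [div_lt_iff₀ hδpos] at this
      nlinarith
    linarith
  set Q : ℕ := Nat.find hS with hQ
  obtain ⟨hQpos, hQsmall⟩ : 0 < Q ∧ f Q < δ := Nat.find_spec hS
  have hQmin : ∀ m : ℕ, m < Q → 0 < m → δ ≤ f m := by
    intro m hm hm0
    by_contra h
    push_neg at h
    exact Nat.find_min hS hm ⟨hm0, h⟩
  -- Q > N
  have hQN : N < Q := by
    by_contra h
    push_neg at h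
    have : δ ≤ f Q := Finset.inf'_le f (Finset.mem_Icc.mpr ⟨hQpos, h⟩)
    linarith
  refine ⟨(Q : ℝ), lt_of_le_of_lt hNT (by exact_mod_cast hQN), ?_⟩
  rintro ⟨p, q, hq0, hqQ, habs⟩
  have hqQ' : q < (Q : ℤ) := by exact_mod_cast hqQ
  set p' : ℤ := round ((Q : ℝ) * θ) with hp'
  set x : ℝ := θ * q - p with hx
  set y : ℝ := (Q : ℝ) * θ - p' with hy
  have hypos : 0 < |y| := by
    have := hfpos Q hQpos
    rw [hf] at this; exact this
  have hyδ : |y| < δ := hQsmall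
  -- δ ≤ |x|
  have hqnat : ∃ m : ℕ, (m : ℤ) = q ∧ 0 < m := ⟨q.toNat, Int.toNat_of_nonneg hq0.le, by
    exact_mod_cast Int.toNat_of_nonneg hq0.le ▸ (by exact_mod_cast hq0 : (0:ℤ) < q)⟩
  obtain ⟨m, hm, hm0⟩ := hqnat
  have hmQ : m < Q := by exact_mod_cast hm ▸ hqQ'
  have hδx : δ ≤ |x| := by
    have h1 : δ ≤ f m := hQmin m hmQ hm0
    have h2 : f m ≤ |x| := by
      rw [hf, hx]; dsimp only
      have : ((m : ℕ) : ℝ) = (q : ℝ) := by exact_mod_cast hm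
      rw [this, mul_comm]
      exact round_nearest _ p
    linarith
  have hQR : (0 : ℝ) < Q := by exact_mod_cast hQpos
  have hqR : (0 : ℝ) < q := by exact_mod_cast hq0
  have hqQR : (q : ℝ) < Q := hqQ
  have hxQ : |x| < 1 / (2 * Q) := habs
  -- integer identity: q * y - Q * x = Q * p - q * p'
  have hid : (q : ℝ) * y - (Q : ℝ) * x = ((Q * p - q * p' : ℤ) : ℝ) := by
    rw [hx, hy]; push_cast; ring
  have hbound : |(q : ℝ) * y - (Q : ℝ) * x| < 1 := by
    have h1 : |(q : ℝ) * y| < 1 / 2 := by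
      rw [abs_mul, abs_of_pos hqR]
      calc (q : ℝ) * |y| < (Q : ℝ) * (1 / (2 * Q)) := by
            apply mul_lt_mul' hqQR.le (lt_of_lt_of_le hyδ (hδx.trans hxQ.le)) (abs_nonneg _) hQR
            |>.trans_le (le_refl _)
        _ = 1 / 2 := by field_simp
    have h2 : |(Q : ℝ) * x| < 1 / 2 := by
      rw [abs_mul, abs_of_pos hQR]
      calc (Q : ℝ) * |x| < (Q : ℝ) * (1 / (2 * Q)) := by
            exact mul_lt_mul_of_pos_left hxQ hQR
        _ = 1 / 2 := by field_simp
    calc |(q : ℝ) * y - (Q : ℝ) * x| ≤ |(q : ℝ) * y| + |(Q : ℝ) * x| := abs_sub _ _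
      _ < 1 := by linarith
  have hzero : (Q : ℤ) * p - q * p' = 0 := by
    by_contra h
    have : (1 : ℝ) ≤ |((Q * p - q * p' : ℤ) : ℝ)| := by
      rw [← Int.cast_abs]
      exact_mod_cast Int.one_le_abs h
    rw [← hid] at this
    linarith
  have heq : (q : ℝ) * y = (Q : ℝ) * x := by
    have : (q : ℝ) * y - (Q : ℝ) * x = 0 := by
      rw [hid]; exact_mod_cast congrArg (Int.cast : ℤ → ℝ) hzero
    linarith
  have : (Q : ℝ) * |x| = (q : ℝ) * |y| := by
    rw [← abs_of_pos hQR, ← abs_of_pos hqR, ← abs_mul, ← abs_mul, heq]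
  nlinarith [mul_lt_mul_of_pos_left (lt_of_lt_of_le hyδ hδx) hqR,
    mul_lt_mul_of_pos_right hqQR hypos, hδx, hyδ]
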